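/- For each α ∈ [0,1], the function f_α(t) = t^α ((1+t)/2)^{1−2α} on (0,∞) satisfies f_α(1) = 1 and f_α(t) = t f_α(1/t), and the family is pointwise monotone decreasing in α: if 0 ≤ α ≤ β ≤ 1 then f_β(t) ≤ f_α(t) for all t > 0, with f₀(t) = (1+t)/2 and f₁(t) = 2t/(1+t). -/

import Mathlib

/-- The family `f_α(t) = t^α ((1+t)/2)^(1−2α)` satisfies `f_α(1) = 1`,
`f_α(t) = t f_α(1/t)`, is pointwise decreasing in `α` on `[0,1]`, and
interpolates between `f₀(t) = (1+t)/2` and `f₁(t) = 2t/(1+t)`. -/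
theorem falpha_family_properties (fa : ℝ → ℝ → ℝ)
    (hfa : ∀ a t : ℝ, fa a t = t ^ a * ((1 + t) / 2) ^ (1 - 2 * a)) :
    (∀ α ∈ Set.Icc (0 : ℝ) 1,
      fa α 1 = 1 ∧ ∀ t : ℝ, 0 < t → fa α t = t * fa α t⁻¹) ∧
    (∀ α β : ℝ, 0 ≤ α → α ≤ β → β ≤ 1 → ∀ t : ℝ, 0 < t → fa β t ≤ fa α t) ∧
    (∀ t : ℝ, 0 < t → fa 0 t = (1 + t) / 2 ∧ fa 1 t = 2 * t / (1 + t)) := by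
  refine ⟨?_, ?_, ?_⟩
  · intro α _
    refine ⟨by simp [hfa], ?_⟩
    intro t ht
    have hc : (0:ℝ) < (1 + t) / 2 := by linarith
    rw [hfa, hfa]
    have h1 : (1 + t⁻¹) / 2 = ((1 + t) / 2) / t := by field_simp; ring
    rw [h1, Real.div_rpow hc.le ht.le, Real.inv_rpow ht.le]
    have h2 : t ^ α * t ^ α * t ^ (1 - 2 * α) = t := by
      rw [← Real.rpow_add ht, ← Real.rpow_add ht,
        show α + α + (1 - 2 * α) = 1 by ring, Real.rpow_one]
    have hta : (0:ℝ) < t ^ α := Real.rpow_pos_of_pos ht _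
    have hte : (0:ℝ) < t ^ (1 - 2 * α) := Real.rpow_pos_of_pos ht _
    field_simp
    nlinarith [h2, Real.rpow_pos_of_pos hc (1 - 2 * α)]
  · intro α β hα hab hβ1 t ht
    have hc : (0:ℝ) < (1 + t) / 2 := by linarith
    have hAM : t ≤ ((1 + t) / 2) ^ (2:ℝ) := by
      rw [Real.rpow_two]
      nlinarith [sq_nonneg (1 - t)]
    have hratio : (t / ((1 + t) / 2) ^ (2:ℝ)) ^ (β - α) ≤ 1 :=
      Real.rpow_le_one (by positivity) (div_le_one_of_le₀ hAM (by positivity)) (by linarith)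
    have hβ : fa β t = fa α t * (t / ((1 + t) / 2) ^ (2:ℝ)) ^ (β - α) := by
      rw [hfa, hfa, Real.div_rpow ht.le (by positivity), ← Real.rpow_mul hc.le]
      have e1 : t ^ β = t ^ α * t ^ (β - α) := by
        rw [← Real.rpow_add ht]; ring_nf
      have e2 : ((1 + t) / 2) ^ (1 - 2 * α) =
          ((1 + t) / 2) ^ (1 - 2 * β) * ((1 + t) / 2) ^ (2 * (β - α)) := by
        rw [← Real.rpow_add hc]; ring_nf
      rw [e1, e2]
      have : (0:ℝ) < ((1 + t) / 2) ^ (2 * (β - α)) := Real.rpow_pos_of_pos hc _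
      field_simp
    have hpos : 0 < fa α t := by
      rw [hfa]; positivity
    calc fa β t = fa α t * (t / ((1 + t) / 2) ^ (2:ℝ)) ^ (β - α) := hβ
      _ ≤ fa α t * 1 := by
          exact mul_le_mul_of_nonneg_left hratio hpos.le
      _ = fa α t := mul_one _
  · intro t ht
    have hc : (0:ℝ) < (1 + t) / 2 := by linarith
    constructor
    · rw [hfa]; simp
    · rw [hfa]
      norm_num
      rw [Real.rpow_neg_one]
      field_simp
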